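/- arXiv:2403.06780 — 2 statements merged into one kernel-verified Lean document; each statement's English description precedes it below -/
import Mathlib

section
/- Let U be a finite nonempty set of tasks, and for each i in U let τ_i ≥ 0 be its minimum forward setup time and μ_i ≥ 0 its minimum backward setup time. Let κ, m̄, m_ be natural numbers with κ ≤ m̄. If in any completion each remaining station incurs at least min_{i∈U} μ_i as backward setup on each of the max(m_ − κ, 0) definitely-used future stations, and all other setups are forward setups each at least τ_i for the task i they precede, and at most m̄ − κ setups are 'saved' (each of value at most max_{i∈U} τ_i), then the total setup time δ of any completion satisfies δ ≥ Σ_{i∈U} τ_i − (m̄ − κ)·max_{i∈U} τ_i + max(m_ − κ, 0)·min_{i∈U} μ_i. -/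
/-- Lower bound on the total setup time of any completion in SUALBP-1.
`U` is the finite nonempty set of unscheduled tasks, `τ i` / `μ i` are the minimum
forward / backward setup times to task `i`, `κ ≤ mUB` the current station index
(`mUB` = upper bound `m̄`, `mLB` = lower bound `m_` on the number of stations).
A completion is modeled by: the per-task setups `δ i`; a set `S ⊆ U` of
"last-on-station" tasks (at most `mUB - κ` of them, each receiving a backward setup
of value at least `min_{i∈U} μ i`, and at least `max(mLB - κ, 0)` of them exist);
all other tasks `i ∈ U \ S` receive a forward setup of value at least `τ (σ i)` for
their successor `σ i ∈ U`, with `σ` injective on `U \ S`.  Then the total setup time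
`δ = Σ_{i∈U} δ i` is at least
`Σ_{i∈U} τ i − (mUB − κ)·max_{i∈U} τ i + max(mLB − κ, 0)·min_{i∈U} μ i`. -/
theorem stmt0 {ι : Type*} [DecidableEq ι] (U : Finset ι) (hU : U.Nonempty)
    (τ μ δ : ι → ℝ) (hτ : ∀ i ∈ U, 0 ≤ τ i) (hμ : ∀ i ∈ U, 0 ≤ μ i)
    (hδ : ∀ i ∈ U, 0 ≤ δ i)
    (κ mUB mLB : ℕ) (hκ : κ ≤ mUB)
    (S : Finset ι) (hSU : S ⊆ U) (hScard : S.card ≤ mUB - κ)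
    (hSmin : max (mLB - κ) 0 ≤ S.card)
    (σ : ι → ι) (hσmem : ∀ i ∈ U \ S, σ i ∈ U)
    (hσinj : ∀ i ∈ U \ S, ∀ j ∈ U \ S, σ i = σ j → i = j)
    (hfwd : ∀ i ∈ U \ S, τ (σ i) ≤ δ i)
    (hbwd : ∀ i ∈ S, U.inf' hU μ ≤ δ i) :
    (∑ i ∈ U, τ i) - ((mUB - κ : ℕ) : ℝ) * (U.sup' hU τ)
      + ((max (mLB - κ) 0 : ℕ) : ℝ) * (U.inf' hU μ) ≤ ∑ i ∈ U, δ i := by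
  classical
  set T : Finset ι := (U \ S).image σ with hT
  have hTU : T ⊆ U := by
    intro x hx
    obtain ⟨i, hi, rfl⟩ := Finset.mem_image.mp hx
    exact hσmem i hi
  have hTcard : T.card = (U \ S).card := Finset.card_image_of_injOn hσinj
  have hUS : (U \ S).card = U.card - S.card := Finset.card_sdiff_of_subset hSU
  have hSle : S.card ≤ U.card := Finset.card_le_card hSU
  have hUTcard : (U \ T).card = S.card := by
    rw [Finset.card_sdiff_of_subset hTU, hTcard, hUS]
    omega
  have hsup0 : 0 ≤ U.sup' hU τ := by
    obtain ⟨i, hi⟩ := hU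
    exact le_trans (hτ i hi) (Finset.le_sup' τ hi)
  have hinf0 : 0 ≤ U.inf' hU μ := Finset.le_inf' hU μ hμ
  -- Σ_U τ ≤ Σ_T τ + |S| * sup
  have h1 : ∑ i ∈ U, τ i ≤ ∑ i ∈ T, τ i + (S.card : ℝ) * U.sup' hU τ := by
    have : ∑ i ∈ U, τ i = ∑ i ∈ T, τ i + ∑ i ∈ U \ T, τ i := by
      rw [add_comm, Finset.sum_sdiff hTU]
    rw [this]
    gcongr
    calc ∑ i ∈ U \ T, τ i ≤ ∑ _i ∈ U \ T, U.sup' hU τ := by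
          apply Finset.sum_le_sum
          intro i hi
          exact Finset.le_sup' τ (Finset.mem_sdiff.mp hi).1
      _ = (S.card : ℝ) * U.sup' hU τ := by
          rw [Finset.sum_const, hUTcard, nsmul_eq_mul]
  -- Σ_T τ = Σ_{U\S} τ(σ i) ≤ Σ_{U\S} δ
  have h2 : ∑ i ∈ T, τ i ≤ ∑ i ∈ U \ S, δ i := by
    rw [hT, Finset.sum_image hσinj]
    exact Finset.sum_le_sum hfwd
  -- Σ_S δ ≥ |S| * inf
  have h3 : (S.card : ℝ) * U.inf' hU μ ≤ ∑ i ∈ S, δ i := by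
    calc (S.card : ℝ) * U.inf' hU μ = ∑ _i ∈ S, U.inf' hU μ := by
          rw [Finset.sum_const, nsmul_eq_mul]
      _ ≤ ∑ i ∈ S, δ i := Finset.sum_le_sum hbwd
  have hsplit : ∑ i ∈ U, δ i = ∑ i ∈ U \ S, δ i + ∑ i ∈ S, δ i :=
    (Finset.sum_sdiff hSU).symm
  have hcard1 : (S.card : ℝ) * U.sup' hU τ ≤ ((mUB - κ : ℕ) : ℝ) * U.sup' hU τ :=
    mul_le_mul_of_nonneg_right (by exact_mod_cast hScard) hsup0
  have hcard2 : ((max (mLB - κ) 0 : ℕ) : ℝ) * U.inf' hU μ ≤ (S.card : ℝ) * U.inf' hU μ :=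
    mul_le_mul_of_nonneg_right (by exact_mod_cast hSmin) hinf0
  nlinarith [h1, h2, h3, hsplit, hcard1, hcard2]
end

section
/- Correctness of the subproblem DIDP recursion for single-station re-sequencing: the value V(V_k, d_k, d_k) computed by recursion (20b) equals the minimum over all permutations π = (π_1, …, π_n) of V_k consistent with the precedence relation P^k of the total setup cost Σ_{l=1}^{n−1} τ_{π_l π_{l+1}} + μ_{π_n π_1}. -/
/-- Sum of forward setup times along a list of tasks. -/
def fwdCost {ι : Type*} (τ : ι → ι → ℝ) : List ι → ℝ
  | [] => 0
  | [_] => 0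
  | a :: b :: rest => τ a b + fwdCost τ (b :: rest)

/-- Total cost of a (nonempty) station sequence: forward setups along the list
plus the backward setup from the last task to the first task. -/
def seqCost {ι : Type*} (τ μ : ι → ι → ℝ) : List ι → ℝ
  | [] => 0
  | a :: rest => fwdCost τ (a :: rest) + μ ((a :: rest).getLast (by simp)) a

/-- A sequence is feasible if every predecessor appears before its successor. -/
def FeasibleSeq {ι : Type*} [DecidableEq ι] (P : ι → Finset ι) (L : List ι) : Prop :=
  ∀ i ∈ L, ∀ j ∈ P i, L.idxOf j < L.idxOf i

section Aux

variable {ι : Type*} [DecidableEq ι]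

lemma feasible_pairwise {P : ι → Finset ι} {L : List ι} (hnd : L.Nodup)
    (hfs : FeasibleSeq P L) : L.Pairwise (fun a b => b ∉ P a) := by
  rw [List.pairwise_iff_getElem]
  intro a b ha hb hab hmem
  have := hfs L[a] (L.getElem_mem ha) L[b] hmem
  rw [List.Nodup.idxOf_getElem hnd, List.Nodup.idxOf_getElem hnd] at this
  omega

lemma pairwise_feasible {P : ι → Finset ι} {L : List ι} (hnd : L.Nodup)
    (hsub : ∀ i ∈ L, P i ⊆ L.toFinset) (hself : ∀ i ∈ L, i ∉ P i)
    (hpw : L.Pairwise (fun a b => b ∉ P a)) : FeasibleSeq P L := by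
  intro i hi j hj
  have hjL : j ∈ L := by
    have := hsub i hi hj
    simpa using this
  have ha : L.idxOf j < L.length := List.idxOf_lt_length_iff.2 hjL
  have hb : L.idxOf i < L.length := List.idxOf_lt_length_iff.2 hi
  have hgj : L[L.idxOf j] = j := List.getElem_idxOf ha
  have hgi : L[L.idxOf i] = i := List.getElem_idxOf hb
  rcases lt_trichotomy (L.idxOf j) (L.idxOf i) with h | h | h
  · exact h
  · exfalso
    have : j = i := (List.idxOf_inj (y := i) hjL).1 h
    exact hself i hi (this ▸ hj)
  · exfalso
    have := (List.pairwise_iff_getElem.1 hpw) _ _ hb ha h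
    rw [hgj, hgi] at this
    exact this hj

lemma key (Vk : Finset ι) (dk : ι)
    (τ μ : ι → ι → ℝ)
    (P : ι → Finset ι)
    (V : Finset ι → ι → ι → ℝ) (U1 : Finset ι → Finset ι)
    (hU1 : ∀ U, U1 U = U.filter (fun j => U ∩ P j = ∅))
    (hbase : V ∅ dk dk = 0)
    (hnext : ∀ U p f, f ≠ dk → ∀ h : (U1 U).Nonempty,
      V U p f = (U1 U).inf' h (fun j => τ p j + V (U.erase j) j f))
    (hclose : ∀ p f, f ≠ dk → V ∅ p f = μ p f + V ∅ dk dk)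
    (hself : ∀ i ∈ Vk, i ∉ P i)
    (hex : ∀ U ⊆ Vk, ∃ L : List ι, L.Nodup ∧ L.toFinset = U ∧
      L.Pairwise (fun a b => b ∉ P a)) :
    ∀ (n : ℕ) (U : Finset ι), U.card = n → U ⊆ Vk → ∀ p f, f ≠ dk →
    IsLeast {x : ℝ | ∃ L : List ι, L.Nodup ∧ L.toFinset = U ∧
        L.Pairwise (fun a b => b ∉ P a) ∧
        x = fwdCost τ (p :: L) + μ ((p :: L).getLast (by simp)) f} (V U p f) := by
  intro n
  induction n using Nat.strong_induction_on with
  | _ n IH =>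
  intro U hcard hUV p f hf
  rcases U.eq_empty_or_nonempty with rfl | hUne
  · constructor
    · exact ⟨[], by simp, by simp, by simp,
        by simp [fwdCost, hclose p f hf, hbase]⟩
    · rintro x ⟨L, hnd, htf, hpw, rfl⟩
      have hL : L = [] := (List.toFinset_eq_empty_iff L).1 htf
      subst hL
      simp [fwdCost, hclose p f hf, hbase]
  · -- U nonempty
    have hU1ne : (U1 U).Nonempty := by
      obtain ⟨L, hnd, htf, hpw⟩ := hex U hUV
      have hLne : L ≠ [] := by
        intro h; subst h; simp at htf; exact hUne.ne_empty htf.symm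
      obtain ⟨j, L', rfl⟩ := List.exists_cons_of_ne_nil hLne
      refine ⟨j, ?_⟩
      rw [hU1 U, Finset.mem_filter]
      have hjU : j ∈ U := htf ▸ (by simp)
      refine ⟨hjU, ?_⟩
      rw [Finset.eq_empty_iff_forall_notMem]
      intro k hk
      rw [Finset.mem_inter] at hk
      have hkL : k ∈ j :: L' := by rw [← List.mem_toFinset, htf]; exact hk.1
      rcases List.mem_cons.1 hkL with rfl | hkL'
      · exact hself k (hUV hjU) hk.2
      · exact (List.pairwise_cons.1 hpw).1 k hkL' hk.2
    have hVeq := hnext U p f hf hU1ne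
    have hmemU1 : ∀ j ∈ U1 U, j ∈ U ∧ U ∩ P j = ∅ := by
      intro j hj
      rw [hU1 U, Finset.mem_filter] at hj
      exact hj
    have hn : 0 < n := hcard ▸ Finset.card_pos.2 hUne
    constructor
    · -- membership
      obtain ⟨j, hjU1, hjeq⟩ := Finset.exists_mem_eq_inf' hU1ne
        (fun j => τ p j + V (U.erase j) j f)
      obtain ⟨hjU, hjP⟩ := hmemU1 j hjU1
      have hcard' : (U.erase j).card < n := by
        rw [Finset.card_erase_of_mem hjU]; omega
      obtain ⟨⟨L', hnd', htf', hpw', hcost'⟩, _⟩ :=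
        IH _ hcard' (U.erase j) rfl ((Finset.erase_subset _ _).trans hUV) j f hf
      have hjL' : j ∉ L' := by
        rw [← List.mem_toFinset, htf']; exact Finset.notMem_erase _ _
      refine ⟨j :: L', List.nodup_cons.2 ⟨hjL', hnd'⟩, ?_, ?_, ?_⟩
      · rw [List.toFinset_cons, htf', Finset.insert_erase hjU]
      · refine List.pairwise_cons.2 ⟨?_, hpw'⟩
        intro b hb
        intro hbP
        have hbU : b ∈ U := Finset.mem_of_mem_erase (htf' ▸ List.mem_toFinset.2 hb)
        have : b ∈ U ∩ P j := Finset.mem_inter.2 ⟨hbU, hbP⟩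
        rw [hjP] at this; exact absurd this (Finset.notMem_empty b)
      · rw [hVeq, hjeq, hcost']
        have hlast : (p :: j :: L').getLast (by simp) =
            (j :: L').getLast (by simp) := List.getLast_cons (by simp)
        rw [hlast]
        show τ p j + (fwdCost τ (j :: L') + _) = τ p j + fwdCost τ (j :: L') + _
        ring
    · -- lower bound
      rintro x ⟨L, hnd, htf, hpw, rfl⟩
      have hLne : L ≠ [] := by
        intro h; subst h; simp at htf; exact hUne.ne_empty htf.symm
      obtain ⟨j, L', rfl⟩ := List.exists_cons_of_ne_nil hLne
      have hjU : j ∈ U := htf ▸ (by simp)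
      have hjL' : j ∉ L' := (List.nodup_cons.1 hnd).1
      have hjP : U ∩ P j = ∅ := by
        rw [Finset.eq_empty_iff_forall_notMem]
        intro k hk
        rw [Finset.mem_inter] at hk
        have hkL : k ∈ j :: L' := by rw [← List.mem_toFinset, htf]; exact hk.1
        rcases List.mem_cons.1 hkL with rfl | hkL'
        · exact hself k (hUV hjU) hk.2
        · exact (List.pairwise_cons.1 hpw).1 k hkL' hk.2
      have hjU1 : j ∈ U1 U := by
        rw [hU1 U, Finset.mem_filter]; exact ⟨hjU, hjP⟩
      have htf' : L'.toFinset = U.erase j := by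
        rw [← htf, List.toFinset_cons, Finset.erase_insert
          (by rw [List.mem_toFinset]; exact hjL')]
      have hcard' : (U.erase j).card < n := by
        rw [Finset.card_erase_of_mem hjU]; omega
      obtain ⟨_, hlb'⟩ :=
        IH _ hcard' (U.erase j) rfl ((Finset.erase_subset _ _).trans hUV) j f hf
      have h1 : V (U.erase j) j f ≤
          fwdCost τ (j :: L') + μ ((j :: L').getLast (by simp)) f :=
        hlb' ⟨L', (List.nodup_cons.1 hnd).2, htf', (List.pairwise_cons.1 hpw).2, rfl⟩
      have h2 : V U p f ≤ τ p j + V (U.erase j) j f := by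
        rw [hVeq]
        exact Finset.inf'_le _ hjU1
      have hlast : (p :: j :: L').getLast (by simp) =
          (j :: L').getLast (by simp) := List.getLast_cons (by simp)
      rw [hlast]
      show V U p f ≤ τ p j + fwdCost τ (j :: L') + _
      linarith

end Aux

/-- Correctness of the single-station re-sequencing DIDP
recursion (20b): for any value function `V` on states `(U, p, f)` satisfying the
recursion, the value `V V_k d_k d_k` is the minimum, over all permutations
(duplicate-free lists) `L` of `V_k` consistent with the precedence relation `P`,
of the total setup cost `Σ_{l=1}^{n−1} τ_{L_l L_{l+1}} + μ_{L_n L_1}`. -/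
theorem stmt15 {ι : Type*} [DecidableEq ι] (Vk : Finset ι) (hVk : Vk.Nonempty)
    (dk : ι) (hdk : dk ∉ Vk)
    (τ μ : ι → ι → ℝ) (hτ : ∀ i j, 0 ≤ τ i j) (hμ : ∀ i j, 0 ≤ μ i j)
    (P : ι → Finset ι) (hP : ∀ i ∈ Vk, P i ⊆ Vk)
    (V : Finset ι → ι → ι → ℝ)
    (U1 : Finset ι → Finset ι)
    (hU1 : ∀ U, U1 U = U.filter (fun j => U ∩ P j = ∅))
    -- (20b-i): base case
    (hbase : V ∅ dk dk = 0)
    -- (20b-ii): assign the first task (`f = d_k`)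
    (hfirst : ∀ U p, ∀ h : (U1 U).Nonempty,
      V U p dk = (U1 U).inf' h (fun j => V (U.erase j) j j))
    -- (20b-iii): assign the next task (`U₁ ≠ ∅`, `f ≠ d_k`)
    (hnext : ∀ U p f, f ≠ dk → ∀ h : (U1 U).Nonempty,
      V U p f = (U1 U).inf' h (fun j => τ p j + V (U.erase j) j f))
    -- (20b-iv): close the station (`U = ∅`, `f ≠ d_k`)
    (hclose : ∀ p f, f ≠ dk → V ∅ p f = μ p f + V ∅ dk dk)
    -- at least one feasible sequence exists (the precedence graph is acyclic)
    (hfeas : ∃ L : List ι, L.Nodup ∧ L.toFinset = Vk ∧ FeasibleSeq P L) :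
    IsLeast {x : ℝ | ∃ L : List ι, L.Nodup ∧ L.toFinset = Vk ∧ FeasibleSeq P L ∧
        x = seqCost τ μ L}
      (V Vk dk dk) := by
  obtain ⟨L0, hnd0, htf0, hfs0⟩ := hfeas
  have hself : ∀ i ∈ Vk, i ∉ P i := by
    intro i hi hip
    have hiL : i ∈ L0 := by rw [← htf0] at hi; exact List.mem_toFinset.1 hi
    exact absurd (hfs0 i hiL i hip) (lt_irrefl _)
  have hpw0 : L0.Pairwise (fun a b => b ∉ P a) := feasible_pairwise hnd0 hfs0
  have hex : ∀ U ⊆ Vk, ∃ L : List ι, L.Nodup ∧ L.toFinset = U ∧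
      L.Pairwise (fun a b => b ∉ P a) := by
    intro U hUV
    refine ⟨L0.filter (· ∈ U), hnd0.filter _, ?_, hpw0.sublist List.filter_sublist⟩
    ext a
    simp only [List.mem_toFinset, List.mem_filter, ← htf0, decide_eq_true_eq]
    constructor
    · rintro ⟨_, h⟩; exact h
    · intro h; exact ⟨List.mem_toFinset.1 (htf0 ▸ hUV h), h⟩
  have hkey := key Vk dk τ μ P V U1 hU1 hbase hnext hclose hself hex
  have hU1ne : (U1 Vk).Nonempty := by
    have hLne : L0 ≠ [] := by
      intro h; subst h; simp at htf0; exact hVk.ne_empty htf0.symm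
    obtain ⟨j, L', rfl⟩ := List.exists_cons_of_ne_nil hLne
    refine ⟨j, ?_⟩
    rw [hU1 Vk, Finset.mem_filter]
    have hjU : j ∈ Vk := htf0 ▸ (by simp)
    refine ⟨hjU, ?_⟩
    rw [Finset.eq_empty_iff_forall_notMem]
    intro k hk
    rw [Finset.mem_inter] at hk
    have hkL : k ∈ j :: L' := by rw [← List.mem_toFinset, htf0]; exact hk.1
    rcases List.mem_cons.1 hkL with rfl | hkL'
    · exact hself k hjU hk.2
    · exact (List.pairwise_cons.1 hpw0).1 k hkL' hk.2
  have hVeq := hfirst Vk dk hU1ne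
  have hmemU1 : ∀ j ∈ U1 Vk, j ∈ Vk ∧ Vk ∩ P j = ∅ := by
    intro j hj
    rw [hU1 Vk, Finset.mem_filter] at hj
    exact hj
  constructor
  · -- membership
    obtain ⟨j, hjU1, hjeq⟩ := Finset.exists_mem_eq_inf' hU1ne
      (fun j => V (Vk.erase j) j j)
    obtain ⟨hjU, hjP⟩ := hmemU1 j hjU1
    have hjdk : j ≠ dk := fun h => hdk (h ▸ hjU)
    obtain ⟨⟨L', hnd', htf', hpw', hcost'⟩, _⟩ :=
      hkey (Vk.erase j).card (Vk.erase j) rfl (Finset.erase_subset _ _) j j hjdk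
    have hjL' : j ∉ L' := by
      rw [← List.mem_toFinset, htf']; exact Finset.notMem_erase _ _
    have hnd : (j :: L').Nodup := List.nodup_cons.2 ⟨hjL', hnd'⟩
    have htf : (j :: L').toFinset = Vk := by
      rw [List.toFinset_cons, htf', Finset.insert_erase hjU]
    have hpw : (j :: L').Pairwise (fun a b => b ∉ P a) := by
      refine List.pairwise_cons.2 ⟨?_, hpw'⟩
      intro b hb hbP
      have hbU : b ∈ Vk := Finset.mem_of_mem_erase (htf' ▸ List.mem_toFinset.2 hb)
      have : b ∈ Vk ∩ P j := Finset.mem_inter.2 ⟨hbU, hbP⟩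
      rw [hjP] at this; exact absurd this (Finset.notMem_empty b)
    refine ⟨j :: L', hnd, htf, ?_, ?_⟩
    · refine pairwise_feasible hnd ?_ ?_ hpw
      · intro i hi
        rw [htf]
        exact hP i (htf ▸ List.mem_toFinset.2 hi)
      · intro i hi
        exact hself i (htf ▸ List.mem_toFinset.2 hi)
    · rw [hVeq, hjeq, hcost']
      rfl
  · -- lower bound
    rintro x ⟨L, hnd, htf, hfs, rfl⟩
    have hpw : L.Pairwise (fun a b => b ∉ P a) := feasible_pairwise hnd hfs
    have hLne : L ≠ [] := by
      intro h; subst h; simp at htf; exact hVk.ne_empty htf.symm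
    obtain ⟨j, L', rfl⟩ := List.exists_cons_of_ne_nil hLne
    have hjU : j ∈ Vk := htf ▸ (by simp)
    have hjdk : j ≠ dk := fun h => hdk (h ▸ hjU)
    have hjL' : j ∉ L' := (List.nodup_cons.1 hnd).1
    have hjP : Vk ∩ P j = ∅ := by
      rw [Finset.eq_empty_iff_forall_notMem]
      intro k hk
      rw [Finset.mem_inter] at hk
      have hkL : k ∈ j :: L' := by rw [← List.mem_toFinset, htf]; exact hk.1
      rcases List.mem_cons.1 hkL with rfl | hkL'
      · exact hself k hjU hk.2
      · exact (List.pairwise_cons.1 hpw).1 k hkL' hk.2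
    have hjU1 : j ∈ U1 Vk := by
      rw [hU1 Vk, Finset.mem_filter]; exact ⟨hjU, hjP⟩
    have htf' : L'.toFinset = Vk.erase j := by
      rw [← htf, List.toFinset_cons, Finset.erase_insert
        (by rw [List.mem_toFinset]; exact hjL')]
    obtain ⟨_, hlb'⟩ :=
      hkey (Vk.erase j).card (Vk.erase j) rfl (Finset.erase_subset _ _) j j hjdk
    have h1 : V (Vk.erase j) j j ≤
        fwdCost τ (j :: L') + μ ((j :: L').getLast (by simp)) j :=
      hlb' ⟨L', (List.nodup_cons.1 hnd).2, htf', (List.pairwise_cons.1 hpw).2, rfl⟩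
    have h2 : V Vk dk dk ≤ V (Vk.erase j) j j := by
      rw [hVeq]
      exact Finset.inf'_le _ hjU1
    calc V Vk dk dk ≤ V (Vk.erase j) j j := h2
      _ ≤ _ := h1
end
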